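/- For b > 0 and 0 < ε sufficiently small, the 2×2 symmetric matrix M_ε(P) with P = [[1, −b],[0, 1]] is positive definite (so sgn M_ε(P) = 2), while for P = [[1, 0],[b, 1]] the matrix M_ε(P) is negative definite (so sgn M_ε(P) = −2). -/

import Mathlib

open Matrix BigOperators

noncomputable section

/-- The standard symplectic matrix `J = [[0, -I],[I, 0]]`. -/
def Jmat (ι : Type*) [Fintype ι] [DecidableEq ι] : Matrix (ι ⊕ ι) (ι ⊕ ι) ℝ :=
  Matrix.fromBlocks 0 (-1) 1 0

/-- `M` is symplectic iff `Mᵀ J M = J`. -/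
def IsSymplectic {ι : Type*} [Fintype ι] [DecidableEq ι]
    (M : Matrix (ι ⊕ ι) (ι ⊕ ι) ℝ) : Prop :=
  Mᵀ * Jmat ι * M = Jmat ι

/-- The matrix `M_ε(P)`. -/
def Mmat {ι : Type*} [Fintype ι] [DecidableEq ι] (ε : ℝ)
    (P : Matrix (ι ⊕ ι) (ι ⊕ ι) ℝ) : Matrix (ι ⊕ ι) (ι ⊕ ι) ℝ :=
  Pᵀ * Matrix.fromBlocks (Real.sin (2*ε) • 1) (-(Real.cos (2*ε)) • 1)
      (-(Real.cos (2*ε)) • 1) (-(Real.sin (2*ε)) • 1) * P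
    + Matrix.fromBlocks (Real.sin (2*ε) • 1) (Real.cos (2*ε) • 1)
      (Real.cos (2*ε) • 1) (-(Real.sin (2*ε)) • 1)

/-- `N = diag(-I, I)`. -/
def Nmat (ι : Type*) [Fintype ι] [DecidableEq ι] : Matrix (ι ⊕ ι) (ι ⊕ ι) ℝ :=
  Matrix.fromBlocks (-1) 0 0 1

/-- `m⁺(F)`: dimension of a maximal subspace on which the quadratic form of `F`
is positive definite. -/
def posDim {ι : Type*} [Fintype ι] (F : Matrix ι ι ℝ) : ℕ :=
  sSup {d : ℕ | ∃ W : Submodule ℝ (ι → ℝ), Module.finrank ℝ W = d ∧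
    ∀ v ∈ W, v ≠ 0 → 0 < F.mulVec v ⬝ᵥ v}

/-- `m⁻(F)`: dimension of a maximal subspace on which the quadratic form of `F`
is negative definite. -/
def negDim {ι : Type*} [Fintype ι] (F : Matrix ι ι ℝ) : ℕ :=
  sSup {d : ℕ | ∃ W : Submodule ℝ (ι → ℝ), Module.finrank ℝ W = d ∧
    ∀ v ∈ W, v ≠ 0 → F.mulVec v ⬝ᵥ v < 0}

/-- The signature `sgn F = m⁺(F) - m⁻(F)`. -/
def signat {ι : Type*} [Fintype ι] (F : Matrix ι ι ℝ) : ℤ :=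
  (posDim F : ℤ) - (negDim F : ℤ)

/-- The `⋄`-product (symplectic direct sum) of two matrices. -/
def diamond {ι₁ ι₂ : Type*}
    (M₁ : Matrix (ι₁ ⊕ ι₁) (ι₁ ⊕ ι₁) ℝ) (M₂ : Matrix (ι₂ ⊕ ι₂) (ι₂ ⊕ ι₂) ℝ) :
    Matrix ((ι₁ ⊕ ι₂) ⊕ (ι₁ ⊕ ι₂)) ((ι₁ ⊕ ι₂) ⊕ (ι₁ ⊕ ι₂)) ℝ :=
  Matrix.fromBlocks
    (Matrix.fromBlocks (M₁.submatrix Sum.inl Sum.inl) 0 0 (M₂.submatrix Sum.inl Sum.inl))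
    (Matrix.fromBlocks (M₁.submatrix Sum.inl Sum.inr) 0 0 (M₂.submatrix Sum.inl Sum.inr))
    (Matrix.fromBlocks (M₁.submatrix Sum.inr Sum.inl) 0 0 (M₂.submatrix Sum.inr Sum.inl))
    (Matrix.fromBlocks (M₁.submatrix Sum.inr Sum.inr) 0 0 (M₂.submatrix Sum.inr Sum.inr))

end


section Aux

lemma Mmat_shear1 (ε b : ℝ) :
    Mmat ε (Matrix.fromBlocks 1 (-b•1) 0 1 : Matrix (Fin 1 ⊕ Fin 1) (Fin 1 ⊕ Fin 1) ℝ)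
    = Matrix.fromBlocks ((2*Real.sin (2*ε))•1) ((-(b*Real.sin (2*ε)))•1)
        ((-(b*Real.sin (2*ε)))•1)
        ((b^2*Real.sin (2*ε) + 2*b*Real.cos (2*ε) - 2*Real.sin (2*ε))•1) := by
  ext i j
  rcases i with i | i <;> rcases j with j | j <;>
    simp [Mmat, Matrix.mul_apply, Matrix.fromBlocks, Fintype.sum_sum_type,
      Fin.sum_univ_one, Matrix.one_apply, Fin.eq_zero j, Fin.eq_zero i] <;> ring

lemma Mmat_shear2 (ε b : ℝ) :
    -(Mmat ε (Matrix.fromBlocks 1 0 (b•1) 1 : Matrix (Fin 1 ⊕ Fin 1) (Fin 1 ⊕ Fin 1) ℝ))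
    = Matrix.fromBlocks ((2*b*Real.cos (2*ε) + b^2*Real.sin (2*ε) - 2*Real.sin (2*ε))•1)
        ((b*Real.sin (2*ε))•1) ((b*Real.sin (2*ε))•1) ((2*Real.sin (2*ε))•1) := by
  ext i j
  rcases i with i | i <;> rcases j with j | j <;>
    simp [Mmat, Matrix.mul_apply, Matrix.fromBlocks, Fintype.sum_sum_type,
      Fin.sum_univ_one, Matrix.one_apply, Fin.eq_zero j, Fin.eq_zero i] <;> ring

lemma posDef_blocks (a c d : ℝ) (ha : 0 < a) (hdet : 0 < a*d - c^2) :
    (Matrix.fromBlocks (a•1) (c•1) (c•1) (d•1) :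
      Matrix (Fin 1 ⊕ Fin 1) (Fin 1 ⊕ Fin 1) ℝ).PosDef := by
  rw [Matrix.posDef_iff_dotProduct_mulVec]
  constructor
  · ext i j
    rcases i with i | i <;> rcases j with j | j <;>
      simp [Matrix.conjTranspose, Matrix.fromBlocks, Fin.eq_zero i, Fin.eq_zero j,
        Matrix.one_apply]
  · intro v hv
    have hq : star v ⬝ᵥ (Matrix.fromBlocks (a•1) (c•1) (c•1) (d•1) :
        Matrix (Fin 1 ⊕ Fin 1) (Fin 1 ⊕ Fin 1) ℝ) *ᵥ v
        = a * (v (Sum.inl 0))^2 + 2*c*(v (Sum.inl 0))*(v (Sum.inr 0)) + d * (v (Sum.inr 0))^2 := by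
      simp [dotProduct, Matrix.mulVec, Fintype.sum_sum_type, Fin.sum_univ_one,
        Matrix.fromBlocks, Matrix.one_apply]
      ring
    rw [hq]
    set x := v (Sum.inl 0) with hxdef
    set y := v (Sum.inr 0) with hydef
    have hxy : x ≠ 0 ∨ y ≠ 0 := by
      by_contra h
      push_neg at h
      apply hv
      funext i
      rcases i with i | i <;> rw [Fin.eq_zero i]
      · exact h.1
      · exact h.2
    rcases eq_or_ne y 0 with hy | hy
    · have hx : x ≠ 0 := by tauto
      have : 0 < x^2 := by positivity
      rw [hy]
      nlinarith
    · have h1 : 0 < (a*d - c^2) * y^2 := by positivity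
      nlinarith [sq_nonneg (a*x + c*y)]

lemma finrank_pi2 : Module.finrank ℝ ((Fin 1 ⊕ Fin 1) → ℝ) = 2 := by
  simp [Module.finrank_fintype_fun_eq_card]

lemma posDim_eq_two {F : Matrix (Fin 1 ⊕ Fin 1) (Fin 1 ⊕ Fin 1) ℝ} (h : F.PosDef) :
    posDim F = 2 := by
  have hmem : (2 : ℕ) ∈ {d : ℕ | ∃ W : Submodule ℝ ((Fin 1 ⊕ Fin 1) → ℝ),
      Module.finrank ℝ W = d ∧ ∀ v ∈ W, v ≠ 0 → 0 < F.mulVec v ⬝ᵥ v} := by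
    refine ⟨⊤, by rw [finrank_top]; exact finrank_pi2, fun v _ hv => ?_⟩
    have := h.dotProduct_mulVec_pos hv
    rwa [star_trivial, dotProduct_comm] at this
  have hub : ∀ d ∈ {d : ℕ | ∃ W : Submodule ℝ ((Fin 1 ⊕ Fin 1) → ℝ),
      Module.finrank ℝ W = d ∧ ∀ v ∈ W, v ≠ 0 → 0 < F.mulVec v ⬝ᵥ v}, d ≤ 2 := by
    rintro d ⟨W, hW, -⟩
    exact hW ▸ (Submodule.finrank_le W).trans_eq finrank_pi2
  exact le_antisymm (csSup_le ⟨2, hmem⟩ hub) (le_csSup ⟨2, hub⟩ hmem)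

lemma negDim_eq_zero {F : Matrix (Fin 1 ⊕ Fin 1) (Fin 1 ⊕ Fin 1) ℝ} (h : F.PosDef) :
    negDim F = 0 := by
  refine le_antisymm (csSup_le ⟨0, ⊥, by simp, ?_⟩ ?_) (Nat.zero_le _)
  · intro v hv hv0
    exact absurd ((Submodule.mem_bot ℝ).mp hv) hv0
  · rintro d ⟨W, hW, hneg⟩
    by_contra hd
    push_neg at hd
    have hWbot : W ≠ ⊥ := by
      intro hbot
      rw [hbot, finrank_bot] at hW
      omega
    obtain ⟨v, hvW, hv0⟩ := Submodule.exists_mem_ne_zero_of_ne_bot hWbot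
    have h1 := hneg v hvW hv0
    have h2 := h.dotProduct_mulVec_pos hv0
    rw [star_trivial, dotProduct_comm] at h2
    linarith

lemma posDim_neg (F : Matrix (Fin 1 ⊕ Fin 1) (Fin 1 ⊕ Fin 1) ℝ) : posDim (-F) = negDim F := by
  simp only [posDim, negDim, Matrix.neg_mulVec, neg_dotProduct, neg_pos]

lemma negDim_neg (F : Matrix (Fin 1 ⊕ Fin 1) (Fin 1 ⊕ Fin 1) ℝ) : negDim (-F) = posDim F := by
  simp only [posDim, negDim, Matrix.neg_mulVec, neg_dotProduct, neg_lt_zero]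

end Aux


/-- For `b > 0` and small `ε > 0`, `M_ε([[1,-b],[0,1]])` is positive definite with
signature `2`, and `M_ε([[1,0],[b,1]])` is negative definite with signature `-2`. -/
theorem signature_shear (b : ℝ) (hb : 0 < b) :
    ∃ ε₀ > 0, ∀ ε : ℝ, 0 < ε → ε < ε₀ →
      (Mmat ε (Matrix.fromBlocks 1 (-b • 1) 0 1 :
        Matrix (Fin 1 ⊕ Fin 1) (Fin 1 ⊕ Fin 1) ℝ)).PosDef ∧
      signat (Mmat ε (Matrix.fromBlocks 1 (-b • 1) 0 1 :
        Matrix (Fin 1 ⊕ Fin 1) (Fin 1 ⊕ Fin 1) ℝ)) = 2 ∧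
      (-(Mmat ε (Matrix.fromBlocks 1 0 (b • 1) 1 :
        Matrix (Fin 1 ⊕ Fin 1) (Fin 1 ⊕ Fin 1) ℝ))).PosDef ∧
      signat (Mmat ε (Matrix.fromBlocks 1 0 (b • 1) 1 :
        Matrix (Fin 1 ⊕ Fin 1) (Fin 1 ⊕ Fin 1) ℝ)) = -2 := by
  refine ⟨min (1/2) (b/4), by positivity, fun ε hε hε' => ?_⟩
  have hε1 : ε < 1/2 := hε'.trans_le (min_le_left _ _)
  have hεb : ε < b/4 := hε'.trans_le (min_le_right _ _)
  set s := Real.sin (2*ε) with hsdef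
  set c := Real.cos (2*ε) with hcdef
  have hs : 0 < s := Real.sin_pos_of_pos_of_lt_pi (by linarith)
    (by nlinarith [Real.pi_gt_three])
  have hslt : s < 2*ε := Real.sin_lt (by linarith)
  have hc : 1/2 < c := by
    have := Real.one_sub_sq_div_two_lt_cos (x := 2*ε) (by positivity)
    nlinarith
  have hsb : s < b/2 := by linarith
  have hkey : 0 < b^2*s + 4*b*c - 4*s := by nlinarith
  have h1 : (Mmat ε (Matrix.fromBlocks 1 (-b • 1) 0 1 :
      Matrix (Fin 1 ⊕ Fin 1) (Fin 1 ⊕ Fin 1) ℝ)).PosDef := by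
    rw [Mmat_shear1]
    refine posDef_blocks _ _ _ (by linarith) ?_
    nlinarith [mul_pos hs hkey]
  have h2 : (-(Mmat ε (Matrix.fromBlocks 1 0 (b • 1) 1 :
      Matrix (Fin 1 ⊕ Fin 1) (Fin 1 ⊕ Fin 1) ℝ))).PosDef := by
    rw [Mmat_shear2]
    refine posDef_blocks _ _ _ (by nlinarith) ?_
    nlinarith [mul_pos hs hkey]
  refine ⟨h1, ?_, h2, ?_⟩
  · rw [signat, posDim_eq_two h1, negDim_eq_zero h1]
    norm_num
  · have hp : posDim (Mmat ε (Matrix.fromBlocks 1 0 (b • 1) 1 :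
        Matrix (Fin 1 ⊕ Fin 1) (Fin 1 ⊕ Fin 1) ℝ)) = 0 := by
      rw [← negDim_neg]
      exact negDim_eq_zero h2
    have hn : negDim (Mmat ε (Matrix.fromBlocks 1 0 (b • 1) 1 :
        Matrix (Fin 1 ⊕ Fin 1) (Fin 1 ⊕ Fin 1) ℝ)) = 2 := by
      rw [← posDim_neg]
      exact posDim_eq_two h2
    rw [signat, hp, hn]
    norm_num
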